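/- arXiv:0805.4449 — 3 statements merged into one kernel-verified Lean document; each statement's English description precedes it below -/
import Mathlib

section
/- Let G be a graph and let f be an integer vector in ZV that is both a Z-linear combination of edge vectors and a nonnegative rational combination of edge vectors whose support is a disjoint union of odd cycles with all edge weights 1/2. Then each connected component of G contains an even number of these odd cycles. -/
open scoped Classical

/-- The vertex following position `i` in the cyclic order of the list `l`. -/
def cnext {V : Type*} (l : List V) (i : Fin l.length) : V :=
  l.get ⟨((i : ℕ) + 1) % l.length,
    Nat.mod_lt _ (Nat.lt_of_le_of_lt (Nat.zero_le _) i.isLt)⟩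

/-- A closed walk in the graph `G` (loops allowed), given as a nonempty list of
vertices in cyclic order. -/
def IsClosedWalk {V : Type*} (G : V → V → Prop) (l : List V) : Prop :=
  l ≠ [] ∧ ∀ i : Fin l.length, G (l.get i) (cnext l i)

/-- The image in `ℤV` of the edge `{x, y}` (a loop at `x` if `x = y`, giving `2x`). -/
def eVec {V : Type*} [DecidableEq V] (x y : V) : V → ℤ :=
  fun v => (if v = x then 1 else 0) + (if v = y then 1 else 0)

/-- Reachability in the graph `G` (connected components). -/
def Reach {V : Type*} (G : V → V → Prop) : V → V → Prop :=
  Relation.ReflTransGen (fun a b => G a b ∨ G b a)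

lemma reach_symm {V : Type*} {G : V → V → Prop} {a b : V} (h : Reach G a b) :
    Reach G b a :=
  (@Relation.ReflTransGen.stdSymm _ _ ⟨fun _ _ h => h.symm⟩).symm _ _ h

lemma walk_reach {V : Type*} {G : V → V → Prop} {l : List V} (h : IsClosedWalk G l)
    {x y : V} (hx : x ∈ l) (hy : y ∈ l) : Reach G x y := by
  obtain ⟨hne, hstep⟩ := h
  have hpos : 0 < l.length := List.length_pos_iff.mpr hne
  have key : ∀ i : Fin l.length, Reach G (l.get ⟨0, hpos⟩) (l.get i) := by
    rintro ⟨n, hn⟩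
    induction n with
    | zero => exact Relation.ReflTransGen.refl
    | succ k ih =>
      have hk : k < l.length := Nat.lt_of_succ_lt hn
      have step := hstep ⟨k, hk⟩
      have hc : cnext l ⟨k, hk⟩ = l.get ⟨k + 1, hn⟩ := by
        simp [cnext, Nat.mod_eq_of_lt hn]
      rw [hc] at step
      exact (ih hk).tail (Or.inl step)
  obtain ⟨i, hi⟩ := List.mem_iff_get.mp hx
  obtain ⟨j, hj⟩ := List.mem_iff_get.mp hy
  subst hi; subst hj
  exact (reach_symm (key i)).trans (key j)

/-- If `f ∈ ℤV` is both a `ℤ`-linear combination of edge vectors of `G` and the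
characteristic vector of a disjoint union of odd cycles of `G` (i.e. the sum of the
half-weighted edges of those cycles), then each connected component of `G` contains an
even number of these odd cycles. -/
theorem stmt6 {V : Type*} [Fintype V] [DecidableEq V] (G : V → V → Prop)
    (C : Finset (List V))
    (hC : ∀ l ∈ C, IsClosedWalk G l ∧ l.Nodup ∧ Odd l.length)
    (hdisj : ∀ l ∈ C, ∀ l' ∈ C, l ≠ l' → ∀ v : V, ¬ (v ∈ l ∧ v ∈ l'))
    (f : V → ℤ) (hf : ∀ v : V, f v = if ∃ l ∈ C, v ∈ l then 1 else 0)
    (hz : ∃ c : V × V → ℤ, (∀ e : V × V, c e ≠ 0 → G e.1 e.2) ∧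
        f = ∑ e : V × V, c e • eVec e.1 e.2) :
    ∀ v : V, Even ((C.filter (fun l => ∃ x ∈ l, Reach G v x)).card) := by
  intro v
  obtain ⟨c, hcG, hfc⟩ := hz
  set S : Finset V := Finset.univ.filter (fun x => Reach G v x) with hS
  have hmemS : ∀ x, x ∈ S ↔ Reach G v x := by simp [hS]
  -- Step 1: the sum of f over S is even.
  have heven : Even (∑ x ∈ S, f x) := by
    have hrw : ∑ x ∈ S, f x
        = ∑ e : V × V, c e * ((if e.1 ∈ S then (1:ℤ) else 0) + (if e.2 ∈ S then 1 else 0)) := by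
      rw [hfc]
      simp only [Finset.sum_apply, Pi.smul_apply, smul_eq_mul]
      rw [Finset.sum_comm]
      refine Finset.sum_congr rfl fun e _ => ?_
      rw [← Finset.mul_sum]
      congr 1
      simp [eVec, Finset.sum_add_distrib]
    rw [hrw]
    apply Finset.even_sum
    intro e _
    by_cases hce : c e = 0
    · simp [hce]
    · have hedge : Reach G e.1 e.2 := Relation.ReflTransGen.single (Or.inl (hcG e hce))
      have hiff : e.1 ∈ S ↔ e.2 ∈ S := by
        rw [hmemS, hmemS]
        exact ⟨fun h => h.trans hedge, fun h => h.trans (reach_symm hedge)⟩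
      by_cases h1 : e.1 ∈ S
      · have h2 : e.2 ∈ S := hiff.mp h1
        simp only [h1, h2, if_pos]
        exact ⟨c e, by ring⟩
      · have h2 : e.2 ∉ S := fun h => h1 (hiff.mpr h)
        simp [h1, h2]
  -- Step 2: the sum of f over S equals the number of cycle vertices in S.
  set D : Finset (List V) := C.filter (fun l => ∃ x ∈ l, Reach G v x) with hD
  have hbiU : S.filter (fun x => ∃ l ∈ C, x ∈ l) = D.biUnion (fun l => l.toFinset) := by
    ext x
    simp only [Finset.mem_filter, Finset.mem_biUnion, List.mem_toFinset, hD]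
    constructor
    · rintro ⟨hxS, l, hlC, hxl⟩
      exact ⟨l, ⟨hlC, ⟨x, hxl, (hmemS x).mp hxS⟩⟩, hxl⟩
    · rintro ⟨l, ⟨hlC, y, hyl, hvy⟩, hxl⟩
      refine ⟨(hmemS x).mpr (hvy.trans (walk_reach (hC l hlC).1 hyl hxl)), l, hlC, hxl⟩
  have hcount : ∑ x ∈ S, f x = ((D.biUnion (fun l => l.toFinset)).card : ℤ) := by
    rw [← hbiU]
    simp only [hf]
    rw [Finset.sum_boole]
  have hcard : (D.biUnion (fun l => l.toFinset)).card = ∑ l ∈ D, l.length := by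
    rw [Finset.card_biUnion]
    · exact Finset.sum_congr rfl fun l hl =>
        List.toFinset_card_of_nodup (hC l (Finset.mem_filter.mp hl).1).2.1
    · intro l hl l' hl' hne
      rw [Function.onFun, Finset.disjoint_left]
      intro x hx hx'
      exact hdisj l (Finset.mem_filter.mp hl).1 l' (Finset.mem_filter.mp hl').1 hne x
        ⟨List.mem_toFinset.mp hx, List.mem_toFinset.mp hx'⟩
  have hevenN : Even (∑ l ∈ D, l.length) := by
    have := hcount ▸ heven
    rw [hcard] at this
    exact_mod_cast this
  rw [Finset.even_sum_iff_even_card_odd] at hevenN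
  have : D.filter (fun l => Odd l.length) = D := by
    apply Finset.filter_true_of_mem
    intro l hl
    exact (hC l (Finset.mem_filter.mp hl).1).2.2
  rwa [this] at hevenN
end

section
/- Let G be a graph in which two odd cycles C1, C2 share a vertex (or more generally are joined by a walk of suitable parity making them not an exceptional pair in the induced sense). If C1 and C2 share a vertex v, then the sum of the half-weighted edge vectors of C1 and C2 is a nonnegative integer combination of edge vectors of G. -/
/-- The characteristic vector (in `ℤV`) of the vertices occurring in a list;
for an odd cycle this is the sum of its half-weighted edges. -/
def ind {V : Type*} [DecidableEq V] (l : List V) : V → ℤ :=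
  fun v => if v ∈ l then 1 else 0


section Aux

variable {V : Type*}

/-- Pair up consecutive elements of a list: `[a,b,c,d] ↦ [(a,b),(c,d)]`. -/
def pairUp : List V → List (V × V)
  | a :: b :: t => (a, b) :: pairUp t
  | _ => []

lemma pairUp_mem {R : V → V → Prop} :
    ∀ {L : List V}, L.Chain' R → ∀ p ∈ pairUp L, R p.1 p.2
  | [], _, p, hp => by simp [pairUp] at hp
  | [a], _, p, hp => by simp [pairUp] at hp
  | a :: b :: t, h, p, hp => by
      rw [pairUp] at hp
      rcases List.mem_cons.1 hp with rfl | hp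
      · exact (List.isChain_cons_cons.1 h).1
      · exact pairUp_mem ((List.isChain_cons_cons.1 h).2.tail) p hp

lemma pairUp_sum [DecidableEq V] (w : V) :
    ∀ L : List V, L.length % 2 = 0 →
      ((pairUp L).map (fun p : V × V => eVec p.1 p.2)).sum w = (L.count w : ℤ)
  | [], _ => by simp [pairUp]
  | [a], h => by simp at h
  | a :: b :: t, h => by
      have ht : t.length % 2 = 0 := by
        simp only [List.length_cons] at h; omega
      have ih := pairUp_sum w t ht
      rw [pairUp]
      simp only [List.map_cons, List.sum_cons, Pi.add_apply, ih,
        List.count_cons, eVec, beq_iff_eq]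
      push_cast
      by_cases hwa : w = a
      · subst hwa
        by_cases hwb : w = b
        · subst hwb; simp; ring
        · simp [hwb, Ne.symm hwb]; ring
      · by_cases hwb : w = b
        · subst hwb; simp [hwa, Ne.symm hwa]; ring
        · simp [hwa, hwb, Ne.symm hwa, Ne.symm hwb]

lemma sum_count [Fintype V] [DecidableEq V] :
    ∀ E : List (V × V),
      ∑ e : V × V, (E.count e : ℤ) • eVec e.1 e.2
        = (E.map (fun p : V × V => eVec p.1 p.2)).sum
  | [] => by simp
  | p :: E => by
      have ih := sum_count E
      simp only [List.count_cons, List.map_cons, List.sum_cons]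
      push_cast
      rw [← ih]
      rw [Finset.sum_congr rfl (fun e _ => add_smul ((E.count e : ℤ)) _ _),
        Finset.sum_add_distrib]
      rw [add_comm]
      congr 1
      rw [Finset.sum_congr rfl (g := fun e => if e = p then eVec e.1 e.2 else 0)
        (fun e _ => by
          by_cases h : p = e
          · subst h; simp
          · simp [beq_iff_eq, h, Ne.symm h])]
      simp

lemma closedWalk_rotate {G : V → V → Prop} {l : List V} (h : IsClosedWalk G l)
    (j : ℕ) : IsClosedWalk G (l.rotate j) := by
  obtain ⟨hne, hw⟩ := h
  have hlen : (l.rotate j).length = l.length := List.length_rotate l j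
  have hpos : 0 < l.length := List.length_pos_iff.2 hne
  refine ⟨List.length_pos_iff.1 (by rw [hlen]; exact hpos), ?_⟩
  intro i
  have h1 : (l.rotate j).get i = l.get ⟨((i : ℕ) + j) % l.length,
      Nat.mod_lt _ hpos⟩ := List.get_rotate l j i
  have h2 : cnext (l.rotate j) i = cnext l ⟨((i : ℕ) + j) % l.length,
      Nat.mod_lt _ hpos⟩ := by
    unfold cnext
    rw [List.get_rotate]
    congr 1
    apply Fin.ext
    simp only [hlen, Nat.mod_add_mod]
    congr 1
    omega
  rw [h1, h2]
  exact hw _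

lemma closedWalk_chain' {G : V → V → Prop} {l : List V} (h : IsClosedWalk G l)
    (h0 : 0 < l.length) : List.Chain' G (l ++ [l.get ⟨0, h0⟩]) := by
  obtain ⟨hne, hw⟩ := h
  show List.IsChain G _
  rw [List.isChain_iff_getElem]
  intro i hi'
  have hi : i < (l ++ [l.get ⟨0, h0⟩]).length - 1 := by simp at hi' ⊢; omega
  show G ((l ++ [l.get ⟨0, h0⟩]).get ⟨i, by omega⟩) ((l ++ [l.get ⟨0, h0⟩]).get ⟨i + 1, hi'⟩)
  have hL : (l ++ [l.get ⟨0, h0⟩]).length = l.length + 1 := by simp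
  rw [hL] at hi
  simp only [Nat.add_sub_cancel] at hi
  have hgi : (l ++ [l.get ⟨0, h0⟩]).get ⟨i, by rw [hL]; omega⟩ = l.get ⟨i, hi⟩ :=
    List.getElem_append_left hi
  by_cases hi1 : i + 1 < l.length
  · have hgi1 : (l ++ [l.get ⟨0, h0⟩]).get ⟨i + 1, by rw [hL]; omega⟩
        = l.get ⟨i + 1, hi1⟩ := List.getElem_append_left hi1
    rw [hgi, hgi1]
    have := hw ⟨i, hi⟩
    unfold cnext at this
    convert this using 3
    simp [Nat.mod_eq_of_lt hi1]
  · have hieq : i + 1 = l.length := by omega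
    have hgi1 : (l ++ [l.get ⟨0, h0⟩]).get ⟨i + 1, by rw [hL]; omega⟩
        = l.get ⟨0, h0⟩ := by
      simp [List.getElem_append_right, hieq]
    rw [hgi, hgi1]
    have := hw ⟨i, hi⟩
    unfold cnext at this
    convert this using 3
    simp [hieq]

end Aux

/-- If two odd cycles `C1`, `C2` of `G` share a vertex `v`, then the sum of the
half-weighted edge vectors of `C1` and `C2` is a nonnegative integer combination of
edge vectors of `G`. -/
theorem stmt8 {V : Type*} [Fintype V] [DecidableEq V] (G : V → V → Prop)
    (hG : Symmetric G) (l1 l2 : List V)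
    (h1 : IsClosedWalk G l1 ∧ l1.Nodup ∧ Odd l1.length)
    (h2 : IsClosedWalk G l2 ∧ l2.Nodup ∧ Odd l2.length)
    (v : V) (hv : v ∈ l1 ∧ v ∈ l2) :
    ∃ m : V × V → ℕ, (∀ e : V × V, m e ≠ 0 → G e.1 e.2) ∧
      ind l1 + ind l2 = ∑ e : V × V, (m e : ℤ) • eVec e.1 e.2 := by
  obtain ⟨hcw1, hnd1, hodd1⟩ := h1
  obtain ⟨hcw2, hnd2, hodd2⟩ := h2
  obtain ⟨hv1, hv2⟩ := hv
  obtain ⟨j1, hj1⟩ := List.mem_iff_get.1 hv1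
  obtain ⟨j2, hj2⟩ := List.mem_iff_get.1 hv2
  set l1' := l1.rotate j1 with hl1'
  set l2' := l2.rotate j2 with hl2'
  have hcw1' : IsClosedWalk G l1' := closedWalk_rotate hcw1 j1
  have hcw2' : IsClosedWalk G l2' := closedWalk_rotate hcw2 j2
  have hpos1 : 0 < l1.length := j1.pos
  have hpos2 : 0 < l2.length := j2.pos
  have hlen1 : l1'.length = l1.length := List.length_rotate l1 j1
  have hlen2 : l2'.length = l2.length := List.length_rotate l2 j2
  have hpos1' : 0 < l1'.length := by omega
  have hpos2' : 0 < l2'.length := by omega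
  have hget1 : l1'.get ⟨0, hpos1'⟩ = v := by
    show (l1.rotate j1).get ⟨0, _⟩ = v
    rw [List.get_rotate]
    simpa [Nat.mod_eq_of_lt j1.isLt] using hj1
  have hget2 : l2'.get ⟨0, hpos2'⟩ = v := by
    show (l2.rotate j2).get ⟨0, _⟩ = v
    rw [List.get_rotate]
    simpa [Nat.mod_eq_of_lt j2.isLt] using hj2
  have hch1 : List.Chain' G (l1' ++ [v]) := by
    have := closedWalk_chain' hcw1' hpos1'
    rwa [hget1] at this
  have hch2t : List.Chain' G l2'.tail := by
    have := closedWalk_chain' hcw2' hpos2'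
    exact this.left_of_append.tail
  set E : List (V × V) := pairUp (l1' ++ [v]) ++ pairUp l2'.tail with hE
  refine ⟨fun e => E.count e, ?_, ?_⟩
  · intro e he
    have hmem : e ∈ E := by
      by_contra hne
      exact he (List.count_eq_zero_of_not_mem hne)
    rcases List.mem_append.1 hmem with h | h
    · exact pairUp_mem hch1 e h
    · exact pairUp_mem hch2t e h
  · rw [sum_count E]
    funext w
    rw [hE, List.map_append, List.sum_append]
    obtain ⟨k1, hk1⟩ := hodd1
    obtain ⟨k2, hk2⟩ := hodd2
    have hpar1 : (l1' ++ [v]).length % 2 = 0 := by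
      simp only [List.length_append, List.length_singleton, hlen1]; omega
    have hpar2 : l2'.tail.length % 2 = 0 := by
      rw [List.length_tail, hlen2]; omega
    have hnd1' : l1'.Nodup := List.nodup_rotate.2 hnd1
    have hnd2' : l2'.Nodup := List.nodup_rotate.2 hnd2
    simp only [Pi.add_apply]
    rw [pairUp_sum w _ hpar1, pairUp_sum w _ hpar2]
    -- decompose l2' as v :: tail
    have hl2cons : l2' = v :: l2'.tail := by
      have hne : l2' ≠ [] := List.length_pos_iff.1 hpos2'
      have hhead : l2'.head hne = v := by
        rw [← List.get_mk_zero hpos2']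
        exact hget2
      conv_lhs => rw [← List.cons_head_tail hne]
      rw [hhead]
    have hmem1 : w ∈ l1' ↔ w ∈ l1 := List.mem_rotate
    have hmem2 : w ∈ l2' ↔ w ∈ l2 := List.mem_rotate
    have hcnt2 : (l2'.count w : ℤ) = (l2'.tail.count w : ℤ) +
        (if v = w then 1 else 0) := by
      conv_lhs => rw [hl2cons]
      rw [List.count_cons]
      push_cast
      simp
    have hc1 : (l1'.count w : ℤ) = ind l1 w := by
      by_cases h : w ∈ l1'
      · rw [List.count_eq_one_of_mem hnd1' h, ind, if_pos (hmem1.1 h)]; norm_num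
      · rw [List.count_eq_zero_of_not_mem h, ind,
          if_neg (fun hc => h (hmem1.2 hc))]
        simp
    have hc2 : (l2'.count w : ℤ) = ind l2 w := by
      by_cases h : w ∈ l2'
      · rw [List.count_eq_one_of_mem hnd2' h, ind, if_pos (hmem2.1 h)]; norm_num
      · rw [List.count_eq_zero_of_not_mem h, ind,
          if_neg (fun hc => h (hmem2.2 hc))]
        simp
    rw [List.count_append]
    push_cast
    have hsingle : ((List.count w [v] : ℕ) : ℤ) = if v = w then 1 else 0 := by
      by_cases h : v = w
      · subst h; simp
      · simp [List.count_singleton', beq_iff_eq, h, Ne.symm h]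
    rw [hsingle, hc1]
    have : (l2'.tail.count w : ℤ) = ind l2 w - (if v = w then 1 else 0) := by
      rw [← hc2, hcnt2]; ring
    rw [this]
    ring
end

section
/- For any element f of the monoid A_G, f decomposes as f = g + h where g is a nonnegative integer combination of edge vectors of G and h is the characteristic vector of a disjoint union of odd cycles of G, where the number of such odd cycles in each connected component of G is even. -/
open scoped Classical

/-- The image in `ℚV` of the edge `{x, y}`. -/
def eVecQ {V : Type*} [DecidableEq V] (x y : V) : V → ℚ :=
  fun v => (if v = x then 1 else 0) + (if v = y then 1 else 0)

/-- The semigroup `A_G`: integer vectors that are nonnegative rational combinations of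
edge vectors of `G` (and lie in the lattice spanned by the edge vectors). -/
def AGset {V : Type*} [Fintype V] [DecidableEq V] (G : V → V → Prop) : Set (V → ℤ) :=
  {f | f ∈ AddSubgroup.closure {g : V → ℤ | ∃ x y, G x y ∧ g = eVec x y} ∧
    ∃ c : V × V → ℚ, (∀ e : V × V, 0 ≤ c e) ∧ (∀ e : V × V, c e ≠ 0 → G e.1 e.2) ∧
      (fun v => (f v : ℚ)) = ∑ e : V × V, c e • eVecQ e.1 e.2}

set_option linter.unusedSectionVars false
set_option linter.unreachableTactic false
set_option linter.unusedTactic false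
set_option linter.unnecessarySimpa false
set_option linter.deprecated false
set_option maxHeartbeats 1000000

namespace Stmt11Aux

open Finset

variable {V : Type*} [Fintype V] [DecidableEq V]

/-- weight of edge `e` at vertex `v` (2 for a loop). -/
def wgt (e : V × V) (v : V) : ℕ :=
  (if v = e.1 then 1 else 0) + (if v = e.2 then 1 else 0)

lemma eVecQ_eq_wgt (e : V × V) (v : V) : eVecQ e.1 e.2 v = (wgt e v : ℚ) := by
  simp only [eVecQ, wgt]; push_cast; ring

lemma eVecQ_comm (x y : V) : eVecQ x y = eVecQ y x := by
  funext v; simp only [eVecQ]; ring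

lemma wgt_pos_iff (e : V × V) (v : V) : wgt e v ≠ 0 ↔ (v = e.1 ∨ v = e.2) := by
  simp only [wgt]; split_ifs <;> simp_all

/-- degree of `v` in the edge set `T` (loops count twice). -/
def degT (T : Finset (V × V)) (v : V) : ℕ := ∑ e ∈ T, wgt e v

def AdjT (T : Finset (V × V)) (x y : V) : Prop := (x, y) ∈ T ∨ (y, x) ∈ T

lemma AdjT_symm {T : Finset (V × V)} {x y : V} (h : AdjT T x y) : AdjT T y x := h.symm

lemma one_le_degT {T : Finset (V × V)} {e : V × V} {v : V} (he : e ∈ T)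
    (hv : e.1 = v ∨ e.2 = v) : 1 ≤ degT T v := by
  have h1 : 1 ≤ wgt e v := by
    rcases hv with h | h <;> simp [wgt, h.symm] <;> split_ifs <;> omega
  calc 1 ≤ wgt e v := h1
    _ ≤ degT T v := Finset.single_le_sum (f := fun e => wgt e v) (fun i _ => Nat.zero_le _) he

lemma degT_three {T : Finset (V × V)} {e1 e2 e3 : V × V} {v : V}
    (h1 : e1 ∈ T) (h2 : e2 ∈ T) (h3 : e3 ∈ T)
    (h12 : e1 ≠ e2) (h13 : e1 ≠ e3) (h23 : e2 ≠ e3)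
    (i1 : e1.1 = v ∨ e1.2 = v) (i2 : e2.1 = v ∨ e2.2 = v) (i3 : e3.1 = v ∨ e3.2 = v) :
    3 ≤ degT T v := by
  have hw : ∀ e : V × V, (e.1 = v ∨ e.2 = v) → 1 ≤ wgt e v := by
    intro e hv; rcases hv with h | h <;> simp [wgt, h.symm] <;> split_ifs <;> omega
  have hsub : ({e1, e2, e3} : Finset (V × V)) ⊆ T := by
    intro e he; simp only [Finset.mem_insert, Finset.mem_singleton] at he
    rcases he with rfl | rfl | rfl <;> assumption
  have hcard : ({e1, e2, e3} : Finset (V × V)).card = 3 := by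
    rw [Finset.card_insert_of_notMem (by simp [h12, h13]),
      Finset.card_insert_of_notMem (by simp [h23]), Finset.card_singleton]
  calc (3 : ℕ) = ({e1, e2, e3} : Finset (V × V)).card • 1 := by rw [hcard]; simp
    _ ≤ ∑ e ∈ ({e1, e2, e3} : Finset (V × V)), wgt e v := by
        apply Finset.card_nsmul_le_sum
        intro e he; simp only [Finset.mem_insert, Finset.mem_singleton] at he
        rcases he with rfl | rfl | rfl <;> [exact hw _ i1; exact hw _ i2; exact hw _ i3]
    _ ≤ degT T v := Finset.sum_le_sum_of_subset hsub

lemma degT_loop {T : Finset (V × V)} {v : V} {e : V × V} (hl : (v, v) ∈ T)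
    (he : e ∈ T) (hne : e ≠ (v, v)) (hi : e.1 = v ∨ e.2 = v) : 3 ≤ degT T v := by
  have h2 : wgt (v, v) v = 2 := by simp [wgt]
  have h1 : 1 ≤ wgt e v := by
    rcases hi with h | h <;> simp [wgt, h.symm] <;> split_ifs <;> omega
  have hsub : ({(v,v), e} : Finset (V × V)) ⊆ T := by
    intro x hx; simp only [Finset.mem_insert, Finset.mem_singleton] at hx
    rcases hx with rfl | rfl <;> assumption
  calc (3:ℕ) ≤ wgt (v,v) v + wgt e v := by omega
    _ = ∑ x ∈ ({(v,v), e} : Finset (V × V)), wgt x v := by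
        rw [Finset.sum_pair (Ne.symm hne)]
    _ ≤ degT T v := Finset.sum_le_sum_of_subset hsub





lemma mod_succ_eq {n a : ℕ} (ha : a < n) :
    (a + 1) % n = if a + 1 = n then 0 else a + 1 := by
  split_ifs with h
  · simp [h]
  · exact Nat.mod_eq_of_lt (by omega)

lemma mod_prev_eq {n a : ℕ} (hn : 2 ≤ n) (ha : a < n) :
    (a + (n - 1)) % n = if a = 0 then n - 1 else a - 1 := by
  split_ifs with h
  · subst h; simpa using Nat.mod_eq_of_lt (by omega)
  · have : a + (n-1) = n + (a - 1) := by omega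
    rw [this, Nat.add_mod_left]
    exact Nat.mod_eq_of_lt (by omega)

theorem List.chain'_iff_get_old {α : Type*} {R : α → α → Prop} {l : List α} : List.Chain' R l ↔
    ∀ (i : ℕ) (h : i < List.length l - 1),
      R (List.get l ⟨i, by omega⟩) (List.get l ⟨i + 1, by omega⟩) := by
  show List.IsChain R l ↔ _; rw [List.isChain_iff_getElem]
  constructor
  · intro h i hi; exact h i (by omega)
  · intro h i hi; exact h i (by omega)

theorem List.chain'_cons {α : Type*} {R : α → α → Prop} {x y : α} {l : List α} :
    List.Chain' R (x :: y :: l) ↔ R x y ∧ List.Chain' R (y :: l) :=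
  List.isChain_cons_cons

theorem List.chain'_reverse {α : Type*} {R : α → α → Prop} {l : List α} :
    List.Chain' R (List.reverse l) ↔ List.Chain' (flip R) l :=
  List.isChain_reverse

theorem List.chain'_singleton {α : Type*} {R : α → α → Prop} (a : α) : List.Chain' R [a] :=
  List.isChain_singleton a

theorem List.get_singleton {α : Type*} (a : α) (n : Fin 1) : [a].get n = a :=
  List.getElem_singleton n.isLt

theorem List.getLast_eq_get {α : Type*} (l : List α) (h : l ≠ []) :
    List.getLast l h = l.get ⟨l.length - 1, by
      have := List.length_pos_iff.mpr h; omega⟩ :=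
  List.getLast_eq_getElem h

lemma closed_of_chain {R : V → V → Prop} (l : List V) (hne : l ≠ [])
    (hch : l.Chain' R) (hcl : R (l.getLast hne) (l.head hne)) :
    ∀ i : Fin l.length, R (l.get i) (cnext l i) := by
  intro i
  have hn : 0 < l.length := List.length_pos_iff.mpr hne
  by_cases hi : (i : ℕ) + 1 < l.length
  · have h1 : cnext l i = l.get ⟨(i:ℕ)+1, hi⟩ := by
      show l.get _ = l.get _
      congr 1
      exact Fin.ext (Nat.mod_eq_of_lt hi)
    rw [h1]
    have := List.chain'_iff_get_old.mp hch (i : ℕ) (by omega)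
    convert this using 2
  · have hz : ((i:ℕ)+1) % l.length = 0 := by
      have : (i:ℕ)+1 = l.length := by have := i.isLt; omega
      simp [this]
    have h1 : cnext l i = l.head hne := by
      have h0 : cnext l i = l.get ⟨0, hn⟩ := by
        unfold cnext; congr 1; exact Fin.ext hz
      rw [h0, List.get_eq_getElem, ← List.head_eq_getElem]
    have h2 : l.get i = l.getLast hne := by
      rw [List.getLast_eq_get]
      congr 1
      apply Fin.ext
      simp only [Fin.val_mk]
      have := i.isLt; omega
    rw [h1, h2]; exact hcl


def IsCyc (T : Finset (V × V)) (l : List V) : Prop :=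
  l ≠ [] ∧ l.Nodup ∧ ∀ i : Fin l.length, AdjT T (l.get i) (cnext l i)

lemma cnext_mem (l : List V) (i : Fin l.length) : cnext l i ∈ l := l.get_mem _

noncomputable def cyedge (T : Finset (V × V)) (l : List V) (i : Fin l.length) : V × V :=
  if (l.get i, cnext l i) ∈ T then (l.get i, cnext l i) else (cnext l i, l.get i)

lemma cyedge_mem {T : Finset (V × V)} {l : List V} (hcyc : IsCyc T l) (i : Fin l.length) :
    cyedge T l i ∈ T := by
  unfold cyedge; split_ifs with h
  · exact h
  · rcases hcyc.2.2 i with h' | h'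
    · exact absurd h' h
    · exact h'

lemma cyedge_or (T : Finset (V × V)) (l : List V) (i : Fin l.length) :
    cyedge T l i = (l.get i, cnext l i) ∨ cyedge T l i = (cnext l i, l.get i) := by
  unfold cyedge; split_ifs <;> simp

lemma cyedge_eVecQ (T : Finset (V × V)) (l : List V) (i : Fin l.length) :
    eVecQ (cyedge T l i).1 (cyedge T l i).2 = eVecQ (l.get i) (cnext l i) := by
  rcases cyedge_or T l i with h | h
  · rw [h]
  · rw [h]; exact eVecQ_comm _ _

def epts (e : V × V) : Finset V := {e.1, e.2}

lemma epts_cyedge (T : Finset (V × V)) (l : List V) (i : Fin l.length) :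
    epts (cyedge T l i) = {l.get i, cnext l i} := by
  rcases cyedge_or T l i with h | h
  · rw [h]; simp [epts]
  · rw [h]; simp [epts, Finset.pair_comm]

lemma mem_epts_fst (e : V × V) : e.1 ∈ epts e := by simp [epts]
lemma mem_epts_snd (e : V × V) : e.2 ∈ epts e := by simp [epts]

lemma mod_succ_inj {n a b : ℕ} (ha : a < n) (hb : b < n)
    (h : (a + 1) % n = (b + 1) % n) : a = b := by
  rw [mod_succ_eq ha, mod_succ_eq hb] at h; split_ifs at h <;> omega

lemma no_two_cycle {n a b : ℕ} (h3 : 3 ≤ n) (ha : a < n) (hb : b < n)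
    (h1 : a = (b + 1) % n) (h2 : b = (a + 1) % n) : False := by
  rw [mod_succ_eq hb] at h1; rw [mod_succ_eq ha] at h2; split_ifs at h1 h2 <;> omega

/-- `cnext` as a `get` of the successor index. -/
def sIdx (l : List V) (i : Fin l.length) : Fin l.length :=
  ⟨((i : ℕ) + 1) % l.length, Nat.mod_lt _ (Nat.lt_of_le_of_lt (Nat.zero_le _) i.isLt)⟩

lemma cnext_eq_get (l : List V) (i : Fin l.length) : cnext l i = l.get (sIdx l i) := rfl

lemma cyedge_inj {T : Finset (V × V)} {l : List V} (hcyc : IsCyc T l)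
    (h3 : 3 ≤ l.length) : Function.Injective (cyedge T l) := by
  intro i j h
  have hnd := hcyc.2.1
  have hget : ∀ i j : Fin l.length, l.get i = l.get j → i = j := by
    intro i j hij; exact (hnd.get_inj_iff).mp hij
  rcases cyedge_or T l i with h1 | h1 <;> rcases cyedge_or T l j with h2 | h2 <;>
    rw [h1, h2, Prod.ext_iff] at h <;> obtain ⟨ha, hb⟩ := h
  · exact hget _ _ ha
  · -- (get i, cnext i) = (cnext j, get j)
    rw [cnext_eq_get] at ha hb
    have e1 : i = sIdx l j := hget _ _ ha
    have e2 : sIdx l i = j := hget _ _ hb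
    exact absurd (no_two_cycle h3 i.isLt j.isLt
      (by rw [e1]; rfl) (by rw [← e2]; rfl)) not_false
  · rw [cnext_eq_get] at ha hb
    have e1 : sIdx l i = j := hget _ _ ha
    have e2 : i = sIdx l j := hget _ _ hb
    exact absurd (no_two_cycle h3 i.isLt j.isLt
      (by rw [e2]; rfl) (by rw [← e1]; rfl)) not_false
  · rw [cnext_eq_get] at ha
    have := hget _ _ ha
    simp only [sIdx, Fin.mk.injEq] at this
    exact Fin.ext (mod_succ_inj i.isLt j.isLt this)

lemma neg_one_pow_mod {n m : ℕ} (hn : Even n) (hn0 : 0 < n) :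
    (-1 : ℚ) ^ (m % n) = (-1) ^ m := by
  conv_rhs => rw [← Nat.div_add_mod m n]
  rw [pow_add, pow_mul, Even.neg_one_pow hn, one_pow, one_mul]

lemma cyc_key {l : List V} (hnd : l.Nodup) (h3 : 3 ≤ l.length) (heven : Even l.length) :
    ∑ i : Fin l.length, ((-1 : ℚ) ^ (i : ℕ)) • eVecQ (l.get i) (cnext l i) = 0 := by
  funext v
  rw [Finset.sum_apply]
  simp only [Pi.smul_apply, Pi.zero_apply, eVecQ, smul_eq_mul]
  have hn0 : 0 < l.length := by omega
  have hsplit : ∀ i : Fin l.length,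
      (-1:ℚ)^(i:ℕ) * ((if v = l.get i then (1:ℚ) else 0) + (if v = cnext l i then 1 else 0))
      = (-1:ℚ)^(i:ℕ) * (if v = l.get i then (1:ℚ) else 0)
        + (-1:ℚ)^(i:ℕ) * (if v = l.get (sIdx l i) then (1:ℚ) else 0) := by
    intro i; rw [cnext_eq_get]; ring
  rw [Finset.sum_congr rfl (fun i _ => hsplit i), Finset.sum_add_distrib]
  set F : Fin l.length → ℚ := fun j => (-1:ℚ)^(j:ℕ) * (if v = l.get j then (1:ℚ) else 0) with hF
  have hsgn : ∀ i : Fin l.length, (-1:ℚ)^((sIdx l i : Fin l.length):ℕ) = -(-1:ℚ)^(i:ℕ) := by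
    intro i
    show (-1:ℚ)^(((i:ℕ)+1) % l.length) = _
    rw [neg_one_pow_mod heven hn0, pow_succ]
    ring
  have hterm : ∀ i : Fin l.length,
      (-1:ℚ)^(i:ℕ) * (if v = l.get (sIdx l i) then (1:ℚ) else 0) = -(F (sIdx l i)) := by
    intro i; rw [hF]; simp only []
    rw [hsgn i]; ring
  rw [Finset.sum_congr rfl (fun i _ => hterm i), Finset.sum_neg_distrib]
  have hbij : Function.Bijective (sIdx l) := by
    rw [← Finite.injective_iff_bijective]
    intro i j hij
    simp only [sIdx, Fin.mk.injEq] at hij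
    exact Fin.ext (mod_succ_inj i.isLt j.isLt hij)
  rw [Function.Bijective.sum_comp hbij F]
  ring

lemma cyc_odd {T : Finset (V × V)} {l : List V}
    (hind : LinearIndependent ℚ (fun e : {e // e ∈ T} => eVecQ (e : V × V).1 (e : V × V).2))
    (hcyc : IsCyc T l) (h3 : 3 ≤ l.length) : Odd l.length := by
  rw [← Nat.not_even_iff_odd]
  intro heven
  set ι : Fin l.length → {e // e ∈ T} := fun i => ⟨cyedge T l i, cyedge_mem hcyc i⟩ with hι
  have hιinj : Function.Injective ι := by
    intro i j h
    exact cyedge_inj hcyc h3 (Subtype.ext_iff.mp h)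
  set gc : {e // e ∈ T} → ℚ :=
    fun e => ∑ i ∈ Finset.univ.filter (fun i => ι i = e), (-1:ℚ)^(i:ℕ) with hgc
  have hsum : ∑ e : {e // e ∈ T}, gc e • eVecQ (e : V × V).1 (e : V × V).2 = 0 := by
    have h1 : ∀ e : {e // e ∈ T}, gc e • eVecQ (e : V × V).1 (e : V × V).2
        = ∑ i ∈ Finset.univ.filter (fun i => ι i = e),
            (-1:ℚ)^(i:ℕ) • eVecQ (l.get i) (cnext l i) := by
      intro e
      rw [hgc]; simp only []
      rw [Finset.sum_smul]
      apply Finset.sum_congr rfl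
      intro i hi
      rw [Finset.mem_filter] at hi
      rw [← hi.2]
      have hcy : eVecQ ((ι i : V × V)).1 ((ι i : V × V)).2 = eVecQ (l.get i) (cnext l i) :=
        cyedge_eVecQ T l i
      rw [hcy]
    rw [Finset.sum_congr rfl (fun e _ => h1 e),
      Finset.sum_fiberwise Finset.univ ι (fun i => (-1:ℚ)^(i:ℕ) • eVecQ (l.get i) (cnext l i))]
    exact cyc_key hcyc.2.1 h3 heven
  have hi0 : (0 : ℕ) < l.length := by omega
  set i0 : Fin l.length := ⟨0, hi0⟩ with hi0def
  have hfib : Finset.univ.filter (fun i => ι i = ι i0) = {i0} := by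
    ext j
    simp only [Finset.mem_filter, Finset.mem_univ, true_and, Finset.mem_singleton]
    exact ⟨fun h => hιinj h, fun h => by rw [h]⟩
  have hval : gc (ι i0) = 1 := by
    rw [hgc]; simp only []
    rw [hfib, Finset.sum_singleton]
    simp [hi0def]
  have := Fintype.linearIndependent_iff.mp hind gc hsum (ι i0)
  rw [hval] at this
  norm_num at this

lemma cyc_deg_pos {T : Finset (V × V)} {l : List V} (hcyc : IsCyc T l) {v : V}
    (hv : v ∈ l) : degT T v ≠ 0 := by
  obtain ⟨i, hi⟩ := List.mem_iff_get.mp hv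
  have hmem := cyedge_mem hcyc i
  have hinc : (cyedge T l i).1 = v ∨ (cyedge T l i).2 = v := by
    rcases cyedge_or T l i with h | h <;> rw [h] <;> [left; right] <;> exact hi
  have := one_le_degT hmem hinc
  omega

lemma cyc_incident {T : Finset (V × V)} {l : List V}
    (hdeg : ∀ v, degT T v = 0 ∨ degT T v = 2) (hcyc : IsCyc T l)
    (hlen : l.length = 1 ∨ 3 ≤ l.length) :
    ∀ v ∈ l, ∀ e ∈ T, e.1 = v ∨ e.2 = v → e.1 ∈ l ∧ e.2 ∈ l := by
  intro v hv e he hinc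
  rcases hlen with h1 | h3
  · obtain ⟨a, rfl⟩ := List.length_eq_one_iff.mp h1
    have hva : v = a := by simpa using hv
    subst hva
    have hloop : (v, v) ∈ T := by
      have h00 := hcyc.2.2 ⟨0, by simp⟩
      have e1 : [v].get ⟨0, by simp⟩ = v := rfl
      have e2 : cnext [v] ⟨0, by simp⟩ = v := by simp [cnext]
      rw [e1, e2] at h00
      rcases h00 with h | h <;> exact h
    by_cases hev : e = (v, v)
    · subst hev; exact ⟨by simp, by simp⟩
    · have := degT_loop hloop he hev hinc
      rcases hdeg v with h | h <;> omega
  · obtain ⟨i, hi⟩ := List.mem_iff_get.mp hv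
    have hn := i.isLt
    have hn2 : 2 ≤ l.length := by omega
    have hiprev_lt : ((i:ℕ) + (l.length - 1)) % l.length < l.length := Nat.mod_lt _ (by omega)
    set iprev : Fin l.length := ⟨((i:ℕ) + (l.length - 1)) % l.length, hiprev_lt⟩ with hiprev
    have hprev_next : cnext l iprev = l.get i := by
      rw [cnext_eq_get]
      congr 1
      apply Fin.ext
      show ((((i:ℕ) + (l.length - 1)) % l.length) + 1) % l.length = (i : ℕ)
      rw [Nat.mod_add_mod]
      have h' : (i:ℕ) + (l.length - 1) + 1 = (i:ℕ) + l.length := by omega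
      rw [h', Nat.add_mod_right]
      exact Nat.mod_eq_of_lt hn
    have hE1 := cyedge_mem hcyc iprev
    have hE2 := cyedge_mem hcyc i
    have hinc1 : (cyedge T l iprev).1 = v ∨ (cyedge T l iprev).2 = v := by
      rcases cyedge_or T l iprev with h | h <;> rw [h] <;> [right; left] <;>
        rw [hprev_next, hi]
    have hinc2 : (cyedge T l i).1 = v ∨ (cyedge T l i).2 = v := by
      rcases cyedge_or T l i with h | h <;> rw [h] <;> [left; right] <;> exact hi
    have hget : ∀ i j : Fin l.length, l.get i = l.get j → i = j :=
      fun i j hij => (hcyc.2.1.get_inj_iff).mp hij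
    have hne12 : cyedge T l iprev ≠ cyedge T l i := by
      intro hcontra
      have hepts := congrArg epts hcontra
      rw [epts_cyedge, epts_cyedge, hprev_next] at hepts
      have hmem : l.get iprev ∈ ({l.get i, cnext l i} : Finset V) := by
        rw [← hepts]; simp
      rw [Finset.mem_insert, Finset.mem_singleton, cnext_eq_get] at hmem
      rcases hmem with h | h
      · have h' := hget _ _ h
        have hval : ((i:ℕ) + (l.length - 1)) % l.length = (i:ℕ) := congrArg Fin.val h'
        rw [mod_prev_eq hn2 hn] at hval
        split_ifs at hval <;> omega
      · have h' := hget _ _ h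
        have hval : ((i:ℕ) + (l.length - 1)) % l.length = ((i:ℕ) + 1) % l.length :=
          congrArg Fin.val h'
        rw [mod_prev_eq hn2 hn, mod_succ_eq hn] at hval
        split_ifs at hval <;> omega
    by_cases hcase : e = cyedge T l iprev ∨ e = cyedge T l i
    · rcases hcase with rfl | rfl
      · constructor
        · have := mem_epts_fst (cyedge T l iprev)
          rw [epts_cyedge, hprev_next] at this
          rcases Finset.mem_insert.mp this with h | h
          · rw [h]; exact l.get_mem _
          · rw [Finset.mem_singleton.mp h]; exact l.get_mem _
        · have := mem_epts_snd (cyedge T l iprev)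
          rw [epts_cyedge, hprev_next] at this
          rcases Finset.mem_insert.mp this with h | h
          · rw [h]; exact l.get_mem _
          · rw [Finset.mem_singleton.mp h]; exact l.get_mem _
      · constructor
        · have := mem_epts_fst (cyedge T l i)
          rw [epts_cyedge] at this
          rcases Finset.mem_insert.mp this with h | h
          · rw [h]; exact l.get_mem _
          · rw [Finset.mem_singleton.mp h]; exact cnext_mem l i
        · have := mem_epts_snd (cyedge T l i)
          rw [epts_cyedge] at this
          rcases Finset.mem_insert.mp this with h | h
          · rw [h]; exact l.get_mem _
          · rw [Finset.mem_singleton.mp h]; exact cnext_mem l i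
    · push_neg at hcase
      have h3deg := degT_three he hE1 hE2 hcase.1 hcase.2 hne12 hinc hinc1 hinc2
      rcases hdeg v with h | h <;> omega

lemma adj_pick {T : Finset (V × V)} {x y : V} (h : AdjT T x y) :
    ∃ e ∈ T, e = (x, y) ∨ e = (y, x) := by
  rcases h with h | h
  · exact ⟨(x, y), h, Or.inl rfl⟩
  · exact ⟨(y, x), h, Or.inr rfl⟩

lemma epts_or {e : V × V} {x y : V} (h : e = (x, y) ∨ e = (y, x)) :
    epts e = {x, y} := by
  rcases h with rfl | rfl
  · rfl
  · exact Finset.pair_comm _ _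

lemma inc_or {e : V × V} {x y : V} (h : e = (x, y) ∨ e = (y, x)) :
    e.1 = y ∨ e.2 = y := by
  rcases h with rfl | rfl
  · right; rfl
  · left; rfl

lemma extend {T : Finset (V × V)}
    (hdeg : ∀ v, degT T v = 0 ∨ degT T v = 2)
    (hH1 : ∀ x y : V, x ≠ y → (x, y) ∈ T → (y, x) ∉ T) :
    ∀ (fuel : ℕ) (a b : V) (q : List V), (a :: b :: q).Nodup →
      List.Chain' (AdjT T) (a :: b :: q) →
      Fintype.card V < fuel + (a :: b :: q).length →
      ∃ l : List V, IsCyc T l ∧ 3 ≤ l.length := by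
  intro fuel
  induction fuel with
  | zero =>
    intro a b q hnd hch hcard
    have := hnd.length_le_card
    omega
  | succ fuel ih =>
    intro a b q hnd hch hcard
    have hab : a ≠ b := by
      intro h; subst h; simp at hnd
    have hAdj_ab : AdjT T a b := (List.chain'_cons.mp hch).1
    obtain ⟨ePrev, hePrevT, hePrevOr⟩ := adj_pick hAdj_ab
    have hwPrev : ePrev.1 = a ∨ ePrev.2 = a := by
      rcases hePrevOr with rfl | rfl
      · left; rfl
      · right; rfl
    have hdeg2 : degT T a = 2 := by
      have h1 := one_le_degT hePrevT hwPrev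
      rcases hdeg a with h | h <;> omega
    have hnoloop : (a, a) ∉ T := by
      intro hl
      have hne : ePrev ≠ (a, a) := by
        rcases hePrevOr with rfl | rfl <;> intro h
        · exact hab (congrArg Prod.snd h).symm
        · exact hab (congrArg Prod.fst h).symm
      have := degT_loop hl hePrevT hne hwPrev
      omega
    have he' : ∃ e' ∈ T, e' ≠ ePrev ∧ (e'.1 = a ∨ e'.2 = a) := by
      by_contra hno
      push_neg at hno
      have hsum : degT T a = wgt ePrev a := by
        apply Finset.sum_eq_single_of_mem ePrev hePrevT
        intro e he hne
        have hz := hno e he hne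
        by_contra hw
        rcases (wgt_pos_iff e a).mp hw with h | h
        · exact hz.1 h.symm
        · exact hz.2 h.symm
      have hw1 : wgt ePrev a = 1 := by
        rcases hePrevOr with rfl | rfl <;> simp [wgt, hab]
      omega
    obtain ⟨e', he'T, he'ne, he'inc⟩ := he'
    set y := if e'.1 = a then e'.2 else e'.1 with hy
    have hor : e' = (a, y) ∨ e' = (y, a) := by
      by_cases h : e'.1 = a
      · left; rw [hy]; simp [h]; rw [← h]
      · right; rw [hy]; simp [h]
        have h2 : e'.2 = a := he'inc.resolve_left h
        rw [← h2]
    have hAdj_ay : AdjT T a y := by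
      rcases hor with h | h
      · left; rw [← h]; exact he'T
      · right; rw [← h]; exact he'T
    have hya : y ≠ a := by
      intro h
      rcases hor with h' | h' <;> rw [h] at h' <;> rw [h'] at he'T <;> exact hnoloop he'T
    have hyb : y ≠ b := by
      intro h
      rw [h] at hor
      rcases hor with h1 | h1 <;> rcases hePrevOr with h2 | h2
      · exact he'ne (h1.trans h2.symm)
      · rw [h1] at he'T; rw [h2] at hePrevT; exact hH1 a b hab he'T hePrevT
      · rw [h1] at he'T; rw [h2] at hePrevT; exact hH1 a b hab hePrevT he'T
      · exact he'ne (h1.trans h2.symm)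
    by_cases hyp : y ∈ (a :: b :: q)
    · obtain ⟨j, hj⟩ := List.mem_iff_get.mp hyp
      have hj0 : (j : ℕ) ≠ 0 := by
        intro h
        apply hya
        rw [← hj]
        have hjj : j = (⟨0, by simp⟩ : Fin (a :: b :: q).length) := Fin.ext h
        rw [hjj]
        rfl
      have hj1 : (j : ℕ) ≠ 1 := by
        intro h
        apply hyb
        rw [← hj]
        have hjj : j = (⟨1, by simp⟩ : Fin (a :: b :: q).length) := Fin.ext h
        rw [hjj]
        rfl
      have hj2 : 2 ≤ (j : ℕ) := by omega
      have hjlt := j.isLt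
      by_cases hjl : (j : ℕ) = (a :: b :: q).length - 1
      · -- close the cycle
        refine ⟨(a :: b :: q).reverse, ⟨?_, ?_, ?_⟩, ?_⟩
        · simp
        · exact List.nodup_reverse.mpr hnd
        · apply closed_of_chain
          · exact List.chain'_reverse.mpr (List.IsChain.imp (fun x y h => AdjT_symm h) hch)
          · have h1 : (a :: b :: q).reverse.getLast (by simp) = a := by
              rw [List.getLast_reverse]
              rfl
            have h2 : (a :: b :: q).reverse.head (by simp) = y := by
              rw [List.head_reverse, List.getLast_eq_get]
              rw [← hj]
              congr 1
              exact Fin.ext (by simp only [Fin.val_mk]; omega)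
            rw [h1, h2]
            exact hAdj_ay
        · simp only [List.length_reverse]
          simp only [List.length_cons] at hjlt ⊢
          omega
      · -- interior vertex: degree 3 contradiction
        exfalso
        have hjl' : (j : ℕ) + 1 < (a :: b :: q).length := by
          simp only [List.length_cons] at hjlt hjl ⊢
          omega
        have hprevlt : (j : ℕ) - 1 < (a :: b :: q).length := by omega
        set prev := (a :: b :: q).get ⟨(j : ℕ) - 1, hprevlt⟩ with hprev
        set nxt := (a :: b :: q).get ⟨(j : ℕ) + 1, hjl'⟩ with hnxt
        have hgetinj : ∀ i k : Fin (a :: b :: q).length,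
            (a :: b :: q).get i = (a :: b :: q).get k → i = k :=
          fun i k hik => (hnd.get_inj_iff).mp hik
        have hAdj_prev : AdjT T prev y := by
          have := List.chain'_iff_get_old.mp hch ((j : ℕ) - 1) (by omega)
          have heq : (a :: b :: q).get ⟨(j : ℕ) - 1 + 1, by omega⟩ = (a :: b :: q).get j := by
            congr 1; exact Fin.ext (by simp; omega)
          rw [heq, hj] at this
          exact this
        have hAdj_next : AdjT T y nxt := by
          have := List.chain'_iff_get_old.mp hch (j : ℕ) (by omega)
          have heq : (a :: b :: q).get ⟨(j : ℕ), by omega⟩ = (a :: b :: q).get j := by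
            congr 1
          rw [heq, hj] at this
          exact this
        obtain ⟨E1, hE1T, hE1or⟩ := adj_pick hAdj_prev
        obtain ⟨E2, hE2T, hE2or⟩ := adj_pick (AdjT_symm hAdj_next)
        -- vertex distinctness
        have hga : (a :: b :: q).get ⟨0, by simp⟩ = a := rfl
        have hprev_ne_next : prev ≠ nxt := by
          intro h
          have h2 := congrArg Fin.val (hgetinj _ _ h)
          simp only [Fin.val_mk] at h2
          omega
        have hprev_ne_a : prev ≠ a := by
          intro h
          rw [← hga] at h
          have h2 := congrArg Fin.val (hgetinj _ _ h)
          simp only [Fin.val_mk] at h2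
          omega
        have hnext_ne_a : nxt ≠ a := by
          intro h
          rw [← hga] at h
          have h2 := congrArg Fin.val (hgetinj _ _ h)
          simp only [Fin.val_mk] at h2
          omega
        have hprev_ne_y : prev ≠ y := by
          intro h
          rw [← hj] at h
          have h2 := congrArg Fin.val (hgetinj _ _ h)
          simp only [Fin.val_mk] at h2
          omega
        have hnext_ne_y : nxt ≠ y := by
          intro h
          rw [← hj] at h
          have h2 := congrArg Fin.val (hgetinj _ _ h)
          simp only [Fin.val_mk] at h2
          omega
        -- E1 has endpoints {prev, y}, E2 has {nxt, y}, e' has {a or y, ...}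
        have hepts1 : epts E1 = {prev, y} := epts_or hE1or
        have hepts2 : epts E2 = {nxt, y} := epts_or hE2or
        have hepts3 : epts e' = {a, y} := epts_or hor
        have hne12 : E1 ≠ E2 := by
          intro h
          have : prev ∈ ({nxt, y} : Finset V) := by
            rw [← hepts2, ← h, hepts1]; simp
          rcases Finset.mem_insert.mp this with h' | h'
          · exact hprev_ne_next h'
          · exact hprev_ne_y (Finset.mem_singleton.mp h')
        have hne13 : E1 ≠ e' := by
          intro h
          have : prev ∈ ({a, y} : Finset V) := by
            rw [← hepts3, ← h, hepts1]; simp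
          rcases Finset.mem_insert.mp this with h' | h'
          · exact hprev_ne_a h'
          · exact hprev_ne_y (Finset.mem_singleton.mp h')
        have hne23 : E2 ≠ e' := by
          intro h
          have : nxt ∈ ({a, y} : Finset V) := by
            rw [← hepts3, ← h, hepts2]; simp
          rcases Finset.mem_insert.mp this with h' | h'
          · exact hnext_ne_a h'
          · exact hnext_ne_y (Finset.mem_singleton.mp h')
        have hinc1 : E1.1 = y ∨ E1.2 = y := inc_or hE1or
        have hinc2 : E2.1 = y ∨ E2.2 = y := inc_or hE2or
        have hinc3 : e'.1 = y ∨ e'.2 = y := by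
          rcases hor with h' | h'
          · right; rw [h']
          · left; rw [h']
        have h3 := degT_three hE1T hE2T he'T hne12 hne13 hne23 hinc1 hinc2 hinc3
        rcases hdeg y with h | h <;> omega
    · -- extend the path
      have hnd' : (y :: a :: b :: q).Nodup := List.nodup_cons.mpr ⟨hyp, hnd⟩
      have hch' : List.Chain' (AdjT T) (y :: a :: b :: q) :=
        List.chain'_cons.mpr ⟨AdjT_symm hAdj_ay, hch⟩
      have hcard' : Fintype.card V < fuel + (y :: a :: b :: q).length := by
        simp only [List.length_cons] at hcard ⊢
        omega
      exact ih y a (b :: q) hnd' hch' hcard'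

lemma indep_subset {T T' : Finset (V × V)} (hsub : T' ⊆ T)
    (hind : LinearIndependent ℚ (fun e : {e // e ∈ T} => eVecQ (e : V × V).1 (e : V × V).2)) :
    LinearIndependent ℚ (fun e : {e // e ∈ T'} => eVecQ (e : V × V).1 (e : V × V).2) := by
  have heq : (fun e : {e // e ∈ T'} => eVecQ (e : V × V).1 (e : V × V).2)
      = (fun e : {e // e ∈ T} => eVecQ (e : V × V).1 (e : V × V).2) ∘
        (fun e : {e // e ∈ T'} => (⟨e.1, hsub e.2⟩ : {e // e ∈ T})) := rfl
  rw [heq]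
  refine hind.comp _ (fun a b hab => ?_)
  apply Subtype.ext
  have h2 := Subtype.ext_iff.mp hab
  exact h2

lemma hH1_of_indep {T : Finset (V × V)}
    (hind : LinearIndependent ℚ (fun e : {e // e ∈ T} => eVecQ (e : V × V).1 (e : V × V).2)) :
    ∀ x y : V, x ≠ y → (x, y) ∈ T → (y, x) ∉ T := by
  intro x y hxy hmem hmem'
  have h := hind.injective (a₁ := ⟨(x, y), hmem⟩) (a₂ := ⟨(y, x), hmem'⟩)
    (by show eVecQ x y = eVecQ y x; exact eVecQ_comm x y)
  have h2 : (x, y) = (y, x) := congrArg Subtype.val h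
  exact hxy (congrArg Prod.fst h2)

lemma degT_filter {T : Finset (V × V)} {l : List V}
    (hdeg : ∀ v, degT T v = 0 ∨ degT T v = 2) (hcyc : IsCyc T l)
    (hlen : l.length = 1 ∨ 3 ≤ l.length) :
    (∀ v ∈ l, degT (T.filter (fun e => e.1 ∉ l ∧ e.2 ∉ l)) v = 0) ∧
    (∀ v ∉ l, degT (T.filter (fun e => e.1 ∉ l ∧ e.2 ∉ l)) v = degT T v) := by
  constructor
  · intro v hv
    apply Finset.sum_eq_zero
    intro e he
    rw [Finset.mem_filter] at he
    have h1 : e.1 ≠ v := fun h => he.2.1 (h ▸ hv)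
    have h2 : e.2 ≠ v := fun h => he.2.2 (h ▸ hv)
    by_contra hw
    rcases (wgt_pos_iff e v).mp hw with h | h
    · exact h1 h.symm
    · exact h2 h.symm
  · intro v hv
    unfold degT
    rw [← Finset.sum_filter_add_sum_filter_not T (fun e => e.1 ∉ l ∧ e.2 ∉ l)
      (fun e => wgt e v)]
    have hz : ∑ e ∈ T.filter (fun e => ¬(e.1 ∉ l ∧ e.2 ∉ l)), wgt e v = 0 := by
      apply Finset.sum_eq_zero
      intro e he
      rw [Finset.mem_filter] at he
      have hend : e.1 ∈ l ∧ e.2 ∈ l := by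
        rcases not_and_or.mp he.2 with h | h
        · exact cyc_incident hdeg hcyc hlen e.1 (not_not.mp h) e he.1 (Or.inl rfl)
        · exact cyc_incident hdeg hcyc hlen e.2 (not_not.mp h) e he.1 (Or.inr rfl)
      by_contra hw
      rcases (wgt_pos_iff e v).mp hw with h | h
      · exact hv (h ▸ hend.1)
      · exact hv (h ▸ hend.2)
    rw [hz, add_zero]

lemma lemC {G : V → V → Prop} (hGsym : Symmetric G) :
    ∀ (n : ℕ) (T : Finset (V × V)), T.card < n →
    (∀ e ∈ T, G e.1 e.2) →
    LinearIndependent ℚ (fun e : {e // e ∈ T} => eVecQ (e : V × V).1 (e : V × V).2) →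
    (∀ v, degT T v = 0 ∨ degT T v = 2) →
    ∃ C : Finset (List V),
      (∀ l ∈ C, IsClosedWalk G l ∧ l.Nodup ∧ Odd l.length) ∧
      (∀ l ∈ C, ∀ l' ∈ C, l ≠ l' → ∀ v : V, ¬(v ∈ l ∧ v ∈ l')) ∧
      (∀ v, (∃ l ∈ C, v ∈ l) ↔ degT T v ≠ 0) := by
  intro n
  induction n with
  | zero => intro T h; omega
  | succ n ih =>
    intro T hcard hG hind hdeg
    by_cases hT : T = ∅
    · refine ⟨∅, by simp, by simp, fun v => ?_⟩
      simp [hT, degT]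
    · obtain ⟨e0, he0⟩ := Finset.nonempty_iff_ne_empty.mpr hT
      have hH1 := hH1_of_indep hind
      have hcycex : ∃ l : List V, IsCyc T l ∧ (l.length = 1 ∨ 3 ≤ l.length) := by
        by_cases hloop : e0.1 = e0.2
        · refine ⟨[e0.1], ⟨by simp, by simp, ?_⟩, Or.inl rfl⟩
          intro i
          have hg : [e0.1].get i = e0.1 := List.get_singleton _ i
          have hc : cnext [e0.1] i = e0.1 := List.get_singleton _ _
          rw [hg, hc]
          left
          have he : (e0.1, e0.1) = e0 := by
            rw [Prod.ext_iff]
            exact ⟨rfl, hloop⟩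
          rw [he]
          exact he0
        · have hnd : [e0.1, e0.2].Nodup := by simp [hloop]
          have hch : List.Chain' (AdjT T) [e0.1, e0.2] := by
            rw [List.chain'_cons]
            refine ⟨Or.inl ?_, List.chain'_singleton _⟩
            rw [show (e0.1, e0.2) = e0 from rfl]
            exact he0
          obtain ⟨l, hcyc, h3⟩ := extend hdeg hH1 (Fintype.card V) e0.1 e0.2 [] hnd hch
            (by simp)
          exact ⟨l, hcyc, Or.inr h3⟩
      obtain ⟨l, hcyc, hlen⟩ := hcycex
      have hodd : Odd l.length := by
        rcases hlen with h1 | h3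
        · rw [h1]; exact odd_one
        · exact cyc_odd hind hcyc h3
      have hdf := degT_filter hdeg hcyc hlen
      set T' := T.filter (fun e => e.1 ∉ l ∧ e.2 ∉ l) with hT'def
      have hsub : T' ⊆ T := Finset.filter_subset _ _
      have hlne : l ≠ [] := hcyc.1
      have hv0 : l.head hlne ∈ l := List.head_mem hlne
      have hTne : T' ≠ T := by
        intro h
        have h1 := hdf.1 _ hv0
        rw [h] at h1
        exact cyc_deg_pos hcyc hv0 h1
      have hcard' : T'.card < T.card :=
        Finset.card_lt_card (lt_of_le_of_ne hsub hTne)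
      obtain ⟨C', hC'walk, hC'disj, hC'iff⟩ := ih T' (by omega)
        (fun e he => hG e (hsub he)) (indep_subset hsub hind)
        (fun v => by
          by_cases hvl : v ∈ l
          · rw [hdf.1 v hvl]; left; rfl
          · rw [hdf.2 v hvl]; exact hdeg v)
      have hAdjG : ∀ x y : V, AdjT T x y → G x y := by
        intro x y h
        rcases h with h | h
        · exact hG (x, y) h
        · exact hGsym (hG (y, x) h)
      refine ⟨insert l C', ?_, ?_, ?_⟩
      · intro l' hl'
        rcases Finset.mem_insert.mp hl' with rfl | hl'
        · exact ⟨⟨hcyc.1, fun i => hAdjG _ _ (hcyc.2.2 i)⟩, hcyc.2.1, hodd⟩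
        · exact hC'walk l' hl'
      · intro l1 h1 l2 h2 hne12 v hv
        obtain ⟨hv1, hv2⟩ := hv
        rcases Finset.mem_insert.mp h1 with he1 | he1
        · rcases Finset.mem_insert.mp h2 with he2 | he2
          · exact hne12 (he1.trans he2.symm)
          · have hd := (hC'iff v).mp ⟨l2, he2, hv2⟩
            rw [he1] at hv1
            exact hd (hdf.1 v hv1)
        · rcases Finset.mem_insert.mp h2 with he2 | he2
          · have hd := (hC'iff v).mp ⟨l1, he1, hv1⟩
            rw [he2] at hv2
            exact hd (hdf.1 v hv2)
          · exact hC'disj l1 he1 l2 he2 hne12 v ⟨hv1, hv2⟩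
      · intro v
        constructor
        · rintro ⟨l', hl', hvl'⟩
          rcases Finset.mem_insert.mp hl' with rfl | hl'
          · exact cyc_deg_pos hcyc hvl'
          · have hd := (hC'iff v).mp ⟨l', hl', hvl'⟩
            by_cases hvl : v ∈ l
            · exact cyc_deg_pos hcyc hvl
            · rw [← hdf.2 v hvl]; exact hd
        · intro hv
          by_cases hvl : v ∈ l
          · exact ⟨l, Finset.mem_insert_self _ _, hvl⟩
          · have hd : degT T' v ≠ 0 := by rw [hdf.2 v hvl]; exact hv
            obtain ⟨l', h', hv'⟩ := (hC'iff v).mpr hd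
            exact ⟨l', Finset.mem_insert_of_mem h', hv'⟩

lemma eVec_cast (x y v : V) : ((eVec x y v : ℤ) : ℚ) = eVecQ x y v := by
  simp only [eVec, eVecQ]
  push_cast
  split_ifs <;> norm_num

lemma card_le_card_supp {T : Finset (V × V)} (S : Finset V)
    (hind : LinearIndependent ℚ (fun e : {e // e ∈ T} => eVecQ (e : V × V).1 (e : V × V).2))
    (hvanish : ∀ e ∈ T, ∀ v : V, v ∉ S → eVecQ (e : V × V).1 (e : V × V).2 v = 0) :
    T.card ≤ S.card := by
  set π : (V → ℚ) →ₗ[ℚ] (↥S → ℚ) := LinearMap.funLeft ℚ ℚ (fun v : ↥S => (v : V)) with hπ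
  have hπind : LinearIndependent ℚ
      (fun e : {e // e ∈ T} => π (eVecQ (e : V × V).1 (e : V × V).2)) := by
    rw [Fintype.linearIndependent_iff]
    intro gc hsum i
    have hu : ∑ e : {e // e ∈ T}, gc e • eVecQ (e : V × V).1 (e : V × V).2 = 0 := by
      funext v
      rw [Finset.sum_apply]
      by_cases hv : v ∈ S
      · have h1 := congrFun hsum ⟨v, hv⟩
        rw [Finset.sum_apply] at h1
        simp only [Pi.smul_apply, smul_eq_mul, hπ, LinearMap.funLeft_apply] at h1
        simpa using h1
      · simp only [Pi.smul_apply, smul_eq_mul, Pi.zero_apply]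
        apply Finset.sum_eq_zero
        intro e _
        rw [hvanish e e.2 v hv, mul_zero]
    exact Fintype.linearIndependent_iff.mp hind gc hu i
  have hcard := hπind.fintype_card_le_finrank
  rwa [Module.finrank_pi ℚ, Fintype.card_coe, Fintype.card_coe] at hcard

lemma min_supp_indep (c : V × V → ℚ) (hc0 : ∀ e, 0 ≤ c e)
    (hmin : ∀ c' : V × V → ℚ, (∀ e, 0 ≤ c' e) → (∀ e, c' e ≠ 0 → c e ≠ 0) →
      (∑ e : V × V, c' e • eVecQ e.1 e.2 = ∑ e : V × V, c e • eVecQ e.1 e.2) →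
      (Finset.univ.filter (fun e : V × V => c e ≠ 0)).card ≤
        (Finset.univ.filter (fun e : V × V => c' e ≠ 0)).card) :
    LinearIndependent ℚ
      (fun e : {e // e ∈ Finset.univ.filter (fun e : V × V => c e ≠ 0)} =>
        eVecQ (e : V × V).1 (e : V × V).2) := by
  set Tc := Finset.univ.filter (fun e : V × V => c e ≠ 0) with hTc
  by_contra hdep
  obtain ⟨g0, hg0sum, i₀0, hg0i⟩ := Fintype.not_linearIndependent_iff.mp hdep
  have hcases : ∃ g : {e // e ∈ Tc} → ℚ,
      (∑ i : {e // e ∈ Tc}, g i • eVecQ (i : V × V).1 (i : V × V).2 = 0) ∧ ∃ i, 0 < g i := by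
    rcases lt_or_gt_of_ne hg0i with h | h
    · refine ⟨-g0, ?_, i₀0, by simpa using h⟩
      rw [← neg_zero, ← hg0sum, ← Finset.sum_neg_distrib]
      apply Finset.sum_congr rfl
      intro e _
      simp [neg_smul]
    · exact ⟨g0, hg0sum, i₀0, h⟩
  obtain ⟨g, hgsum, i₀, hgi⟩ := hcases
  classical
  set lam : V × V → ℚ := fun e => if h : e ∈ Tc then g ⟨e, h⟩ else 0 with hlam
  have hlam_mem : ∀ (e : V × V) (h : e ∈ Tc), lam e = g ⟨e, h⟩ := by
    intro e h; rw [hlam]; simp [h]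
  have hlam_nmem : ∀ e : V × V, e ∉ Tc → lam e = 0 := by
    intro e h; rw [hlam]; simp [h]
  have hlam_sum : ∑ e : V × V, lam e • eVecQ e.1 e.2 = 0 := by
    have h2 : ∑ e ∈ Tc, lam e • eVecQ e.1 e.2 = ∑ e : V × V, lam e • eVecQ e.1 e.2 :=
      Finset.sum_subset (Finset.subset_univ _)
        (fun e _ he => by rw [hlam_nmem e he, zero_smul])
    rw [← h2, ← Finset.sum_coe_sort Tc (fun e => lam e • eVecQ e.1 e.2)]
    rw [← hgsum]
    apply Finset.sum_congr rfl
    intro e _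
    rw [hlam_mem e e.2]
  set F := Tc.filter (fun e => 0 < lam e) with hF
  have hFne : F.Nonempty := by
    refine ⟨(i₀ : V × V), ?_⟩
    rw [hF, Finset.mem_filter]
    exact ⟨i₀.2, by rw [hlam_mem _ i₀.2]; simpa using hgi⟩
  obtain ⟨e0, he0F, he0min⟩ := Finset.exists_min_image F (fun e => c e / lam e) hFne
  have he0Tc : e0 ∈ Tc := (Finset.mem_filter.mp he0F).1
  have hlam0 : 0 < lam e0 := (Finset.mem_filter.mp he0F).2
  have hce0 : 0 < c e0 := by
    have := (Finset.mem_filter.mp he0Tc).2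
    rcases lt_or_eq_of_le (hc0 e0) with h | h
    · exact h
    · exact absurd h.symm this
  set t := c e0 / lam e0 with ht
  have ht0 : 0 ≤ t := le_of_lt (div_pos hce0 hlam0)
  set c' : V × V → ℚ := fun e => c e - t * lam e with hc'
  have h1 : ∀ e, 0 ≤ c' e := by
    intro e
    have hval : c' e = c e - t * lam e := rfl
    rw [hval]
    by_cases he : e ∈ Tc
    · by_cases hl : 0 < lam e
      · have heF : e ∈ F := by rw [hF, Finset.mem_filter]; exact ⟨he, hl⟩
        have := he0min e heF
        have hle : t * lam e ≤ (c e / lam e) * lam e :=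
          mul_le_mul_of_nonneg_right this (le_of_lt hl)
        rw [div_mul_cancel₀ _ (ne_of_gt hl)] at hle
        simp only [sub_nonneg]
        exact hle
      · push_neg at hl
        have : t * lam e ≤ 0 := mul_nonpos_of_nonneg_of_nonpos ht0 hl
        have := hc0 e
        simp only [sub_nonneg]
        linarith
    · rw [hlam_nmem e he, mul_zero, sub_zero]
      exact hc0 e
  have h2 : ∀ e, c' e ≠ 0 → c e ≠ 0 := by
    intro e hne hc
    apply hne
    have heTc : e ∉ Tc := by
      rw [hTc, Finset.mem_filter]
      push_neg
      intro _
      exact hc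
    have hval : c' e = c e - t * lam e := rfl
    rw [hval, hlam_nmem e heTc, mul_zero, sub_zero]
    exact hc
  have h3 : ∑ e : V × V, c' e • eVecQ e.1 e.2 = ∑ e : V × V, c e • eVecQ e.1 e.2 := by
    have : ∀ e : V × V, c' e • eVecQ e.1 e.2
        = c e • eVecQ e.1 e.2 - t • (lam e • eVecQ e.1 e.2) := by
      intro e
      have hval : c' e = c e - t * lam e := rfl
      rw [hval, sub_smul, smul_smul]
    rw [Finset.sum_congr rfl (fun e _ => this e), Finset.sum_sub_distrib,
      ← Finset.smul_sum, hlam_sum, smul_zero, sub_zero]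
  have hcard := hmin c' h1 h2 h3
  have hc'e0 : c' e0 = 0 := by
    have hval : c' e0 = c e0 - t * lam e0 := rfl
    rw [hval, ht, div_mul_cancel₀ _ (ne_of_gt hlam0), sub_self]
  have hsub : Finset.univ.filter (fun e : V × V => c' e ≠ 0) ⊆ Tc.erase e0 := by
    intro e he
    rw [Finset.mem_filter] at he
    rw [Finset.mem_erase]
    constructor
    · intro h
      rw [h] at he
      exact he.2 hc'e0
    · rw [hTc, Finset.mem_filter]
      exact ⟨Finset.mem_univ _, h2 e he.2⟩
  have hlt : (Finset.univ.filter (fun e : V × V => c' e ≠ 0)).card < Tc.card := by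
    calc (Finset.univ.filter (fun e : V × V => c' e ≠ 0)).card
        ≤ (Tc.erase e0).card := Finset.card_le_card hsub
      _ < Tc.card := Finset.card_erase_lt_of_mem he0Tc
  omega

lemma wgt_total (e : V × V) : ∑ v : V, wgt e v = 2 := by
  unfold wgt
  rw [Finset.sum_add_distrib]
  rw [Finset.sum_ite_eq' Finset.univ e.1 (fun _ => (1 : ℕ)),
    Finset.sum_ite_eq' Finset.univ e.2 (fun _ => (1 : ℕ))]
  simp

lemma reach_symm {G : V → V → Prop} {x y : V} (h : Reach G x y) : Reach G y x := by
  have hsym : Symmetric (fun a b => G a b ∨ G b a) := fun a b hab => hab.symm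
  haveI : Std.Symm (fun a b => G a b ∨ G b a) := ⟨hsym⟩
  exact Relation.ReflTransGen.symmetric.symm _ _ h

lemma cyc_reach {G : V → V → Prop} {l : List V} (hw : IsClosedWalk G l) :
    ∀ x ∈ l, ∀ y ∈ l, Reach G x y := by
  have hne := hw.1
  have h0 : 0 < l.length := List.length_pos_iff.mpr hne
  have hhead : ∀ k (hk : k < l.length), Reach G (l.get ⟨0, h0⟩) (l.get ⟨k, hk⟩) := by
    intro k
    induction k with
    | zero => intro hk; exact Relation.ReflTransGen.refl
    | succ k ihk =>
      intro hk
      have hk' : k < l.length := by omega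
      have hG := hw.2 ⟨k, hk'⟩
      have hc : cnext l ⟨k, hk'⟩ = l.get ⟨k + 1, hk⟩ := by
        show l.get _ = l.get _
        congr 1
        exact Fin.ext (Nat.mod_eq_of_lt hk)
      rw [hc] at hG
      exact Relation.ReflTransGen.tail (ihk hk') (Or.inl hG)
  intro x hx y hy
  obtain ⟨i, hi⟩ := List.mem_iff_get.mp hx
  obtain ⟨j, hj⟩ := List.mem_iff_get.mp hy
  have h1 : Reach G (l.get ⟨0, h0⟩) x := by rw [← hi]; exact hhead i i.isLt
  have h2 : Reach G (l.get ⟨0, h0⟩) y := by rw [← hj]; exact hhead j j.isLt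
  exact Relation.ReflTransGen.trans (reach_symm h1) h2

lemma even_sum_closure {G : V → V → Prop} (v : V) {f : V → ℤ}
    (hf : f ∈ AddSubgroup.closure {g : V → ℤ | ∃ x y, G x y ∧ g = eVec x y}) :
    Even (∑ x ∈ Finset.univ.filter (fun x => Reach G v x), f x) := by
  induction hf using AddSubgroup.closure_induction with
  | mem g hg =>
    obtain ⟨a, b, hab, rfl⟩ := hg
    have hsplit : ∑ x ∈ Finset.univ.filter (fun x => Reach G v x), eVec a b x
        = (if a ∈ Finset.univ.filter (fun x => Reach G v x) then (1:ℤ) else 0)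
          + (if b ∈ Finset.univ.filter (fun x => Reach G v x) then (1:ℤ) else 0) := by
      unfold eVec
      rw [Finset.sum_add_distrib,
        Finset.sum_ite_eq' (Finset.univ.filter (fun x => Reach G v x)) a (fun _ => (1:ℤ)),
        Finset.sum_ite_eq' (Finset.univ.filter (fun x => Reach G v x)) b (fun _ => (1:ℤ))]
    rw [hsplit]
    have hiff : a ∈ Finset.univ.filter (fun x => Reach G v x)
        ↔ b ∈ Finset.univ.filter (fun x => Reach G v x) := by
      simp only [Finset.mem_filter, Finset.mem_univ, true_and]
      constructor
      · intro h; exact h.tail (Or.inl hab)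
      · intro h; exact h.tail (Or.inr hab)
    by_cases ha : a ∈ Finset.univ.filter (fun x => Reach G v x)
    · rw [if_pos ha, if_pos (hiff.mp ha)]
      exact ⟨1, rfl⟩
    · rw [if_neg ha, if_neg (fun hb => ha (hiff.mpr hb))]
      simp
  | zero => simp
  | add x y hx hy ihx ihy =>
    simp only [Pi.add_apply]
    rw [Finset.sum_add_distrib]
    exact ihx.add ihy
  | neg x hx ihx =>
    simp only [Pi.neg_apply]
    rw [Finset.sum_neg_distrib]
    exact ihx.neg

end Stmt11Aux

open Stmt11Aux

/-- Every `f ∈ A_G` decomposes as `f = g + h` with `g` a nonnegative integer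
combination of edge vectors and `h` the characteristic vector of a disjoint union of
odd cycles of `G`, with an even number of these cycles in each connected component. -/
theorem stmt11 {V : Type*} [Fintype V] [DecidableEq V] (G : V → V → Prop)
    (hG : Symmetric G) (f : V → ℤ) (hf : f ∈ AGset G) :
    ∃ (m : V × V → ℕ) (C : Finset (List V)),
      (∀ e : V × V, m e ≠ 0 → G e.1 e.2) ∧
      (∀ l ∈ C, IsClosedWalk G l ∧ l.Nodup ∧ Odd l.length) ∧
      (∀ l ∈ C, ∀ l' ∈ C, l ≠ l' → ∀ v : V, ¬ (v ∈ l ∧ v ∈ l')) ∧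
      (∀ v : V, Even ((C.filter (fun l => ∃ x ∈ l, Reach G v x)).card)) ∧
      f = (∑ e : V × V, (m e : ℤ) • eVec e.1 e.2) +
        (fun v => if ∃ l ∈ C, v ∈ l then 1 else 0) := by
  classical
  obtain ⟨hlat, hexc⟩ := hf
  have hex : ∃ n : ℕ, ∃ c : V × V → ℚ,
      ((∀ e, 0 ≤ c e) ∧ (∀ e, c e ≠ 0 → G e.1 e.2) ∧
        ((fun v => (f v : ℚ)) = ∑ e : V × V, c e • eVecQ e.1 e.2)) ∧
      (Finset.univ.filter (fun e => c e ≠ 0)).card = n := by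
    obtain ⟨c, h1, h2, h3⟩ := hexc
    exact ⟨_, c, ⟨h1, h2, h3⟩, rfl⟩
  obtain ⟨c, ⟨hc0, hcG, hcsum⟩, hcard⟩ := Nat.find_spec hex
  have hmin : ∀ c' : V × V → ℚ, (∀ e, 0 ≤ c' e) → (∀ e, c' e ≠ 0 → c e ≠ 0) →
      (∑ e : V × V, c' e • eVecQ e.1 e.2 = ∑ e : V × V, c e • eVecQ e.1 e.2) →
      (Finset.univ.filter (fun e : V × V => c e ≠ 0)).card ≤
        (Finset.univ.filter (fun e : V × V => c' e ≠ 0)).card := by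
    intro c' h1 h2 h3
    have hP : ∃ c'' : V × V → ℚ,
        ((∀ e, 0 ≤ c'' e) ∧ (∀ e, c'' e ≠ 0 → G e.1 e.2) ∧
          ((fun v => (f v : ℚ)) = ∑ e : V × V, c'' e • eVecQ e.1 e.2)) ∧
        (Finset.univ.filter (fun e => c'' e ≠ 0)).card
          = (Finset.univ.filter (fun e : V × V => c' e ≠ 0)).card :=
      ⟨c', ⟨h1, fun e he => hcG e (h2 e he), hcsum.trans h3.symm⟩, rfl⟩
    have hfind := Nat.find_min' hex hP
    omega
  have hind := min_supp_indep c hc0 hmin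
  -- integer and fractional parts
  set m : V × V → ℕ := fun e => (⌊c e⌋).toNat with hm
  set r : V × V → ℚ := fun e => Int.fract (c e) with hr
  have hmcast : ∀ e, ((m e : ℤ) : ℚ) = ((⌊c e⌋ : ℤ) : ℚ) := by
    intro e
    rw [hm]
    norm_cast
    exact Int.toNat_of_nonneg (Int.floor_nonneg.mpr (hc0 e))
  have hrsplit : ∀ e, c e = (m e : ℚ) + r e := by
    intro e
    have : ((m e : ℤ) : ℚ) + Int.fract (c e) = c e := by
      rw [hmcast]
      exact Int.floor_add_fract (c e)
    rw [hr]
    push_cast at this ⊢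
    linarith
  have hr0 : ∀ e, 0 ≤ r e := fun e => Int.fract_nonneg _
  have hr1 : ∀ e, r e < 1 := fun e => Int.fract_lt_one _
  set gp : V → ℤ := fun v => ∑ e : V × V, (m e : ℤ) * eVec e.1 e.2 v with hgp
  set h : V → ℤ := fun v => f v - gp v with hh
  have hhc : ∀ v, (h v : ℚ) = ∑ e : V × V, r e * eVecQ e.1 e.2 v := by
    intro v
    have h1 : (f v : ℚ) = ∑ e : V × V, c e * eVecQ e.1 e.2 v := by
      have h2 := congrFun hcsum v
      rw [Finset.sum_apply] at h2
      simpa [smul_eq_mul] using h2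
    have h3 : (h v : ℚ) = (f v : ℚ) - ∑ e : V × V, (m e : ℚ) * eVecQ e.1 e.2 v := by
      have : h v = f v - gp v := rfl
      rw [this]
      have hgpv : gp v = ∑ e : V × V, (m e : ℤ) * eVec e.1 e.2 v := rfl
      rw [hgpv]
      push_cast
      congr 1
      apply Finset.sum_congr rfl
      intro e _
      rw [eVec_cast]
    rw [h3, h1, ← Finset.sum_sub_distrib]
    apply Finset.sum_congr rfl
    intro e _
    rw [hrsplit e]
    ring
  set Tr : Finset (V × V) := Finset.univ.filter (fun e => r e ≠ 0) with hTr
  have hTrsub : Tr ⊆ Finset.univ.filter (fun e : V × V => c e ≠ 0) := by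
    intro e he
    rw [hTr, Finset.mem_filter] at he
    rw [Finset.mem_filter]
    refine ⟨Finset.mem_univ _, fun hc => he.2 ?_⟩
    rw [hr]
    simp only []
    rw [hc, Int.fract_zero]
  have hindr := indep_subset hTrsub hind
  have hTrG : ∀ e ∈ Tr, G e.1 e.2 := by
    intro e he
    have := hTrsub he
    rw [Finset.mem_filter] at this
    exact hcG e this.2
  have hhw : ∀ v, (h v : ℚ) = ∑ e ∈ Tr, r e * (wgt e v : ℚ) := by
    intro v
    rw [hhc v]
    rw [← Finset.sum_subset (Finset.subset_univ Tr) (fun e _ he => ?_)]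
    · apply Finset.sum_congr rfl
      intro e _
      rw [eVecQ_eq_wgt]
    · have : r e = 0 := by
        by_contra hre
        exact he (by rw [hTr, Finset.mem_filter]; exact ⟨Finset.mem_univ _, hre⟩)
      rw [this, zero_mul]
  have hd0 : ∀ v, degT Tr v = 0 → h v = 0 := by
    intro v hdv
    have : (h v : ℚ) = 0 := by
      rw [hhw v]
      apply Finset.sum_eq_zero
      intro e he
      have hwz : wgt e v = 0 := by
        by_contra hw
        have h1 : 1 ≤ wgt e v := Nat.one_le_iff_ne_zero.mpr hw
        have h2 : wgt e v ≤ ∑ x ∈ Tr, wgt x v :=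
          Finset.single_le_sum (f := fun e => wgt e v) (fun i _ => Nat.zero_le _) he
        have h3 : degT Tr v = ∑ x ∈ Tr, wgt x v := rfl
        omega
      rw [hwz]
      norm_num
    exact_mod_cast this
  have hdpos : ∀ v, degT Tr v ≠ 0 → (0 < h v ∧ (h v : ℚ) < (degT Tr v : ℕ)) := by
    intro v hdv
    have hex1 : ∃ e ∈ Tr, wgt e v ≠ 0 := by
      by_contra hno
      push_neg at hno
      exact hdv (Finset.sum_eq_zero (fun e he => hno e he))
    obtain ⟨e1, he1, hw1⟩ := hex1
    have hr1pos : 0 < r e1 := by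
      rcases lt_or_eq_of_le (hr0 e1) with h' | h'
      · exact h'
      · exfalso
        have := (Finset.mem_filter.mp (hTr ▸ he1)).2
        exact this h'.symm
    constructor
    · have : (0:ℚ) < (h v : ℚ) := by
        rw [hhw v]
        apply Finset.sum_pos' (fun e he => mul_nonneg (hr0 e) (by positivity))
        refine ⟨e1, he1, ?_⟩
        have : (1:ℚ) ≤ (wgt e1 v : ℚ) := by
          have := Nat.one_le_iff_ne_zero.mpr hw1
          exact_mod_cast this
        nlinarith
      exact_mod_cast this
    · rw [hhw v]
      unfold degT
      rw [Nat.cast_sum]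
      apply Finset.sum_lt_sum ?_ ⟨e1, he1, ?_⟩
      · intro e he
        by_cases hwe : wgt e v = 0
        · rw [hwe]; norm_num
        · have h1 : (0:ℚ) < (wgt e v : ℚ) := by
            have h2 := Nat.one_le_iff_ne_zero.mpr hwe
            have h3 : (1:ℚ) ≤ (wgt e v : ℚ) := by exact_mod_cast h2
            linarith
          nlinarith [hr1 e, hr0 e]
      · have h1 : (0:ℚ) < (wgt e1 v : ℚ) := by
          have h2 := Nat.one_le_iff_ne_zero.mpr hw1
          have h3 : (1:ℚ) ≤ (wgt e1 v : ℚ) := by exact_mod_cast h2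
          linarith
        nlinarith [hr1 e1, hr0 e1]
  have hd1 : ∀ v, degT Tr v ≠ 1 := by
    intro v hdv
    have hpos := hdpos v (by omega)
    have h1 : (h v : ℚ) < 1 := by
      have := hpos.2
      rw [hdv] at this
      simpa using this
    have h2 : (1:ℚ) ≤ (h v : ℚ) := by exact_mod_cast hpos.1
    linarith
  set S : Finset V := Finset.univ.filter (fun v => degT Tr v ≠ 0) with hS
  have hvanish : ∀ e ∈ Tr, ∀ w : V, w ∉ S → eVecQ (e : V × V).1 (e : V × V).2 w = 0 := by
    intro e he w hw
    have hdw : degT Tr w = 0 := by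
      by_contra hd
      exact hw (by rw [hS, Finset.mem_filter]; exact ⟨Finset.mem_univ _, hd⟩)
    have hwz : wgt e w = 0 := by
      by_contra hwe
      have h1 : 1 ≤ wgt e w := Nat.one_le_iff_ne_zero.mpr hwe
      have h2 : wgt e w ≤ ∑ x ∈ Tr, wgt x w :=
        Finset.single_le_sum (f := fun e => wgt e w) (fun i _ => Nat.zero_le _) he
      have h3 : degT Tr w = ∑ x ∈ Tr, wgt x w := rfl
      omega
    rw [eVecQ_eq_wgt, hwz]
    norm_num
  have hcardle := card_le_card_supp S hindr hvanish
  have hdsum : ∑ v : V, degT Tr v = 2 * Tr.card := by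
    unfold degT
    rw [Finset.sum_comm]
    rw [Finset.sum_congr rfl (fun e _ => wgt_total e)]
    rw [Finset.sum_const, smul_eq_mul]
    ring
  have hdeg2 : ∀ v, degT Tr v = 0 ∨ degT Tr v = 2 := by
    have hlow : ∀ v ∈ S, 2 ≤ degT Tr v := by
      intro v hv
      rw [hS, Finset.mem_filter] at hv
      have := hd1 v
      omega
    have hsum_eq : ∑ v ∈ S, degT Tr v = ∑ v : V, degT Tr v := by
      apply Finset.sum_subset (Finset.subset_univ _)
      intro v _ hv
      by_contra hd
      exact hv (by rw [hS, Finset.mem_filter]; exact ⟨Finset.mem_univ _, hd⟩)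
    have hall2 : ∀ v ∈ S, degT Tr v = 2 := by
      by_contra hno
      push_neg at hno
      obtain ⟨v0, hv0, hv0ne⟩ := hno
      have hstrict : ∑ v ∈ S, (2:ℕ) < ∑ v ∈ S, degT Tr v := by
        apply Finset.sum_lt_sum (fun v hv => hlow v hv)
        exact ⟨v0, hv0, by have := hlow v0 hv0; omega⟩
      rw [Finset.sum_const, smul_eq_mul, mul_comm] at hstrict
      rw [hsum_eq, hdsum] at hstrict
      omega
    intro v
    by_cases hv : v ∈ S
    · right; exact hall2 v hv
    · left
      by_contra hd
      exact hv (by rw [hS, Finset.mem_filter]; exact ⟨Finset.mem_univ _, hd⟩)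
  have hval1 : ∀ v, degT Tr v = 2 → h v = 1 := by
    intro v hdv
    have hpos := hdpos v (by omega)
    have h2 : (h v : ℚ) < 2 := by
      have := hpos.2
      rw [hdv] at this
      exact_mod_cast this
    have h2' : h v < 2 := by exact_mod_cast h2
    have := hpos.1
    omega
  obtain ⟨C, hCwalk, hCdisj, hCiff⟩ :=
    lemC hG (Tr.card + 1) Tr (by omega) hTrG hindr hdeg2
  have hhind : ∀ v, h v = if (∃ l ∈ C, v ∈ l) then 1 else 0 := by
    intro v
    by_cases hexl : ∃ l ∈ C, v ∈ l
    · rw [if_pos hexl]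
      have hd := (hCiff v).mp hexl
      rcases hdeg2 v with h0 | h2
      · exact absurd h0 hd
      · exact hval1 v h2
    · rw [if_neg hexl]
      apply hd0
      by_contra hd
      exact hexl ((hCiff v).mpr hd)
  refine ⟨m, C, ?_, hCwalk, hCdisj, ?_, ?_⟩
  · intro e hme
    apply hcG
    intro hce
    apply hme
    rw [hm]
    simp only []
    rw [hce]
    simp
  · -- parity
    intro v
    have hevenf : Even (∑ x ∈ Finset.univ.filter (fun x => Reach G v x), f x) :=
      even_sum_closure v hlat
    have heveng : Even (∑ x ∈ Finset.univ.filter (fun x => Reach G v x), gp x) := by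
      have hswap : ∑ x ∈ Finset.univ.filter (fun x => Reach G v x), gp x
          = ∑ e : V × V, (m e : ℤ) *
              (∑ x ∈ Finset.univ.filter (fun x => Reach G v x), eVec e.1 e.2 x) := by
        rw [hgp]
        simp only []
        rw [Finset.sum_comm]
        apply Finset.sum_congr rfl
        intro e _
        rw [Finset.mul_sum]
      rw [hswap]
      apply Finset.even_sum
      intro e _
      by_cases hme : m e = 0
      · rw [hme]; simp
      · have hGe : G e.1 e.2 := by
          apply hcG
          intro hce
          apply hme
          rw [hm]; simp only []; rw [hce]; simp
        have := even_sum_closure v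
          (AddSubgroup.subset_closure (⟨e.1, e.2, hGe, rfl⟩ :
            eVec e.1 e.2 ∈ {g : V → ℤ | ∃ x y, G x y ∧ g = eVec x y}))
        exact this.mul_left _
    have hevenh : Even (∑ x ∈ Finset.univ.filter (fun x => Reach G v x), h x) := by
      have : ∑ x ∈ Finset.univ.filter (fun x => Reach G v x), h x
          = (∑ x ∈ Finset.univ.filter (fun x => Reach G v x), f x)
            - ∑ x ∈ Finset.univ.filter (fun x => Reach G v x), gp x := by
        rw [← Finset.sum_sub_distrib]
      rw [this]
      exact hevenf.sub heveng
    -- now relate to cycle lengths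
    set Sv := Finset.univ.filter (fun x => Reach G v x) with hSv
    set Cv := C.filter (fun l => ∃ x ∈ l, Reach G v x) with hCv
    have hsetEq : Sv.filter (fun x => ∃ l ∈ C, x ∈ l) = Cv.biUnion (fun l => l.toFinset) := by
      ext x
      rw [Finset.mem_filter, Finset.mem_biUnion]
      constructor
      · rintro ⟨hxSv, l, hlC, hxl⟩
        refine ⟨l, ?_, List.mem_toFinset.mpr hxl⟩
        rw [hCv, Finset.mem_filter]
        refine ⟨hlC, x, hxl, ?_⟩
        rw [hSv, Finset.mem_filter] at hxSv
        exact hxSv.2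
      · rintro ⟨l, hlCv, hxl⟩
        rw [hCv, Finset.mem_filter] at hlCv
        obtain ⟨hlC, x', hx'l, hx'⟩ := hlCv
        have hxl' := List.mem_toFinset.mp hxl
        have hreach : Reach G v x := Relation.ReflTransGen.trans hx'
          (cyc_reach (hCwalk l hlC).1 x' hx'l x hxl')
        exact ⟨by rw [hSv, Finset.mem_filter]; exact ⟨Finset.mem_univ _, hreach⟩, l, hlC, hxl'⟩
    have hcount : ∑ x ∈ Sv, h x = ((∑ l ∈ Cv, l.length : ℕ) : ℤ) := by
      have h1 : ∑ x ∈ Sv, h x = ((Sv.filter (fun x => ∃ l ∈ C, x ∈ l)).card : ℤ) := by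
        rw [Finset.sum_congr rfl (fun x _ => hhind x)]
        rw [Finset.sum_boole]
      rw [h1, hsetEq]
      rw [Finset.card_biUnion]
      · norm_cast
        apply Finset.sum_congr rfl
        intro l hl
        have hnd := (hCwalk l (Finset.mem_filter.mp (hCv ▸ hl)).1).2.1
        exact List.toFinset_card_of_nodup hnd
      · intro l1 h1 l2 h2 hne
        rw [Function.onFun, Finset.disjoint_left]
        intro x hx1 hx2
        have hl1C := (Finset.mem_filter.mp (hCv ▸ h1)).1
        have hl2C := (Finset.mem_filter.mp (hCv ▸ h2)).1
        exact hCdisj l1 hl1C l2 hl2C hne x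
          ⟨List.mem_toFinset.mp hx1, List.mem_toFinset.mp hx2⟩
    have hevenlen : Even (∑ l ∈ Cv, l.length) := by
      have : Even ((∑ l ∈ Cv, l.length : ℕ) : ℤ) := by
        rw [← hcount]; exact hevenh
      exact_mod_cast this
    have hodd : ∀ l ∈ Cv, l.length % 2 = 1 := by
      intro l hl
      have hlC := (Finset.mem_filter.mp (hCv ▸ hl)).1
      exact Nat.odd_iff.mp (hCwalk l hlC).2.2
    rw [Nat.even_iff]
    rw [Nat.even_iff] at hevenlen
    rw [Finset.sum_nat_mod, Finset.sum_congr rfl hodd, Finset.sum_const, smul_eq_mul,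
      mul_one] at hevenlen
    exact hevenlen
  · -- the decomposition
    funext v
    have h1 : (∑ e : V × V, (m e : ℤ) • eVec e.1 e.2) v = gp v := by
      rw [Finset.sum_apply]
      show ∑ e : V × V, ((m e : ℤ) • eVec e.1 e.2) v = ∑ e : V × V, (m e : ℤ) * eVec e.1 e.2 v
      apply Finset.sum_congr rfl
      intro e _
      simp [smul_eq_mul]
    show f v = (∑ e : V × V, (m e : ℤ) • eVec e.1 e.2) v + (if ∃ l ∈ C, v ∈ l then 1 else 0)
    rw [h1, ← hhind v]
    have h2 : h v = f v - gp v := rfl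
    omega
end
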